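/- There exists a constant C > 0 such that for every real β with 0 < β ≤ 1/4 and every t ≥ 0, the solutions A₀(·;β) and A₁(·;β) of the ODE u'' + u' + β²u = 0 on [0,∞) with initial data (u(0),u'(0)) = (1,0) and (0,1), respectively, satisfy |A₀(t;β)| ≤ C(β²·e^{−t/2} + e^{−β²t}) and |A₁(t;β)| ≤ C(e^{−t/2} + e^{−β²t}). -/

import Mathlib

open Set Real

lemma unique_sol (β a b p q : ℝ) (ha : a^2 + a + β^2 = 0) (hb : b^2 + b + β^2 = 0)
    (u u' u'' : ℝ → ℝ)
    (hu : ∀ t ∈ Set.Ici (0 : ℝ), HasDerivWithinAt u (u' t) (Set.Ici 0) t)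
    (hu' : ∀ t ∈ Set.Ici (0 : ℝ), HasDerivWithinAt u' (u'' t) (Set.Ici 0) t)
    (hode : ∀ t ∈ Set.Ici (0 : ℝ), u'' t + u' t + β^2 * u t = 0)
    (h0 : u 0 = p + q) (h0' : u' 0 = p * a + q * b) :
    ∀ t : ℝ, 0 ≤ t → u t = p * Real.exp (a * t) + q * Real.exp (b * t) := by
  intro t ht
  -- the linear vector field
  set L : (ℝ × ℝ) →L[ℝ] (ℝ × ℝ) :=
    (ContinuousLinearMap.snd ℝ ℝ ℝ).prod
      (-(ContinuousLinearMap.snd ℝ ℝ ℝ) - β^2 • ContinuousLinearMap.fst ℝ ℝ ℝ) with hL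
  have hLx : ∀ x : ℝ × ℝ, L x = (x.2, -x.2 - β^2 * x.1) := by
    intro x; simp [hL]
  set E : ℝ → ℝ := fun s => p * Real.exp (a * s) + q * Real.exp (b * s) with hE
  set E' : ℝ → ℝ := fun s => p * a * Real.exp (a * s) + q * b * Real.exp (b * s) with hE'
  have hEd : ∀ s : ℝ, HasDerivAt E (E' s) s := by
    intro s
    have h1 : HasDerivAt (fun s => Real.exp (a * s)) (a * Real.exp (a * s)) s := by
      simpa [mul_comm, Function.comp_def] using (Real.hasDerivAt_exp (a * s)).comp s ((hasDerivAt_id s).const_mul a)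
    have h2 : HasDerivAt (fun s => Real.exp (b * s)) (b * Real.exp (b * s)) s := by
      simpa [mul_comm, Function.comp_def] using (Real.hasDerivAt_exp (b * s)).comp s ((hasDerivAt_id s).const_mul b)
    have := (h1.const_mul p).add (h2.const_mul q)
    convert this using 1
    · rfl
    · rfl
    · rfl
    simp [hE']; ring
  have hEd' : ∀ s : ℝ, HasDerivAt E' (-(E' s) - β^2 * E s) s := by
    intro s
    have h1 : HasDerivAt (fun s => Real.exp (a * s)) (a * Real.exp (a * s)) s := by
      simpa [mul_comm, Function.comp_def] using (Real.hasDerivAt_exp (a * s)).comp s ((hasDerivAt_id s).const_mul a)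
    have h2 : HasDerivAt (fun s => Real.exp (b * s)) (b * Real.exp (b * s)) s := by
      simpa [mul_comm, Function.comp_def] using (Real.hasDerivAt_exp (b * s)).comp s ((hasDerivAt_id s).const_mul b)
    have := (h1.const_mul (p * a)).add (h2.const_mul (q * b))
    convert this using 1
    have ha2 : a^2 = -a - β^2 := by linarith
    have hb2 : b^2 = -b - β^2 := by linarith
    · rfl
    · rfl
    · rfl
    simp only [hE', hE]
    linear_combination (-(p * Real.exp (a*s))) * ha + (-(q * Real.exp (b*s))) * hb
  have hcu : ContinuousOn (fun s => (u s, u' s)) (Set.Icc 0 t) := by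
    apply ContinuousOn.mono _ (Set.Icc_subset_Ici_self)
    exact ContinuousOn.prodMk (fun s hs => (hu s hs).continuousWithinAt)
      (fun s hs => (hu' s hs).continuousWithinAt)
  have hcg : ContinuousOn (fun s => (E s, E' s)) (Set.Icc 0 t) :=
    (Continuous.prodMk (by fun_prop) (by fun_prop)).continuousOn
  have key := ODE_solution_unique (v := fun _ x => L x) (K := ‖L‖₊)
    (fun _ => L.lipschitz) hcu
    (fun s hs => by
      have hs0 : s ∈ Set.Ici (0:ℝ) := hs.1
      have hd := ((hu s hs0).mono (Set.Ici_subset_Ici.2 hs.1)).prodMk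
        ((hu' s hs0).mono (Set.Ici_subset_Ici.2 hs.1))
      have heq : (u' s, u'' s) = L (u s, u' s) := by
        rw [hLx]
        have h2 : u'' s = -u' s - β^2 * u s := by have := hode s hs0; linarith
        rw [h2]
      rwa [heq] at hd)
    hcg
    (fun s hs => by
      have hd := ((hEd s).prodMk (hEd' s)).hasDerivWithinAt (s := Set.Ici s)
      have heq : (E' s, -(E' s) - β^2 * E s) = L (E s, E' s) := by
        rw [hLx]
      rwa [heq] at hd)
    (by
      simp only [Prod.mk.injEq, hE, hE']
      constructor
      · simpa using h0
      · simpa using h0')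
  have := congrArg Prod.fst (key ⟨ht, le_refl t⟩)
  simpa [hE] using this

set_option maxHeartbeats 1000000 in
/-- Low-frequency pointwise estimates for the fundamental solutions `A₀, A₁`
of the damped oscillator equation `u'' + u' + β²u = 0` on `[0, ∞)` with data
`(1,0)` and `(0,1)`, uniformly in `0 < β ≤ 1/4`. -/
theorem stmt_5 :
    ∃ C : ℝ, 0 < C ∧
      ∀ β : ℝ, 0 < β → β ≤ 1/4 →
      ∀ A₀ A₀' A₀'' A₁ A₁' A₁'' : ℝ → ℝ,
      (∀ t ∈ Set.Ici (0 : ℝ), HasDerivWithinAt A₀ (A₀' t) (Set.Ici 0) t) →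
      (∀ t ∈ Set.Ici (0 : ℝ), HasDerivWithinAt A₀' (A₀'' t) (Set.Ici 0) t) →
      (∀ t ∈ Set.Ici (0 : ℝ), A₀'' t + A₀' t + β^2 * A₀ t = 0) →
      A₀ 0 = 1 → A₀' 0 = 0 →
      (∀ t ∈ Set.Ici (0 : ℝ), HasDerivWithinAt A₁ (A₁' t) (Set.Ici 0) t) →
      (∀ t ∈ Set.Ici (0 : ℝ), HasDerivWithinAt A₁' (A₁'' t) (Set.Ici 0) t) →
      (∀ t ∈ Set.Ici (0 : ℝ), A₁'' t + A₁' t + β^2 * A₁ t = 0) →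
      A₁ 0 = 0 → A₁' 0 = 1 →
      ∀ t : ℝ, 0 ≤ t →
        |A₀ t| ≤ C * (β^2 * Real.exp (-t/2) + Real.exp (-(β^2 * t))) ∧
        |A₁ t| ≤ C * (Real.exp (-t/2) + Real.exp (-(β^2 * t))) := by
  refine ⟨4, by norm_num, ?_⟩
  intro β hβ hβ4 A₀ A₀' A₀'' A₁ A₁' A₁'' hd0 hd0' ho0 hA00 hA00' hd1 hd1' ho1 hA10 hA10' t ht
  have hβ2 : β^2 ≤ 1/16 := by nlinarith
  have hβ2pos : 0 < β^2 := by positivity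
  set D := Real.sqrt (1 - 4*β^2) with hDdef
  have hDnn : (0:ℝ) ≤ 1 - 4*β^2 := by nlinarith
  have hD2 : D^2 = 1 - 4*β^2 := Real.sq_sqrt hDnn
  have hDle1 : D ≤ 1 := by
    rw [hDdef]
    calc Real.sqrt (1 - 4*β^2) ≤ Real.sqrt 1 := Real.sqrt_le_sqrt (by nlinarith)
      _ = 1 := Real.sqrt_one
  have hDge : (1/2:ℝ) ≤ D := by
    rw [hDdef]
    calc (1/2:ℝ) = Real.sqrt ((1/2)^2) := (Real.sqrt_sq (by norm_num)).symm
      _ ≤ Real.sqrt (1 - 4*β^2) := Real.sqrt_le_sqrt (by nlinarith)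
  have hDpos : 0 < D := by linarith
  set a := (-1 + D)/2 with hadef
  set b := (-1 - D)/2 with hbdef
  have haroot : a^2 + a + β^2 = 0 := by rw [hadef]; linear_combination (1/4) * hD2
  have hbroot : b^2 + b + β^2 = 0 := by rw [hbdef]; linear_combination (1/4) * hD2
  have hDle : D ≤ 1 - 2*β^2 := by
    rw [hDdef]
    calc Real.sqrt (1 - 4*β^2) ≤ Real.sqrt ((1-2*β^2)^2) :=
          Real.sqrt_le_sqrt (by nlinarith)
      _ = 1 - 2*β^2 := Real.sqrt_sq (by nlinarith)
  have hDge2 : 1 - 4*β^2 ≤ D := by nlinarith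
  have ha1 : a ≤ -β^2 := by rw [hadef]; linarith
  have ha2 : -(2*β^2) ≤ a := by rw [hadef]; linarith
  have hb1 : -1 ≤ b := by rw [hbdef]; linarith
  have hb2 : b ≤ -(1/2) := by rw [hbdef]; linarith
  have hexpa : Real.exp (a*t) ≤ Real.exp (-(β^2 * t)) :=
    Real.exp_le_exp.2 (by nlinarith)
  have hexpb : Real.exp (b*t) ≤ Real.exp (-t/2) :=
    Real.exp_le_exp.2 (by nlinarith)
  have hea := (Real.exp_pos (a*t)).le
  have heb := (Real.exp_pos (b*t)).le
  constructor
  · -- A₀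
    have hu := unique_sol β a b (-b/D) (a/D) haroot hbroot A₀ A₀' A₀'' hd0 hd0' ho0
      (by rw [hA00]; field_simp; rw [hadef, hbdef]; ring)
      (by rw [hA00']; field_simp; rw [hadef, hbdef]; ring) t ht
    rw [hu]
    have hp : (0:ℝ) ≤ -b/D := div_nonneg (by linarith) hDpos.le
    have hq : a/D ≤ 0 := div_nonpos_of_nonpos_of_nonneg (by linarith) hDpos.le
    have hpb : -b/D ≤ 2 := by rw [div_le_iff₀ hDpos]; linarith
    have hqb : -(a/D) ≤ 4*β^2 := by
      have h : -(a/D) = (-a)/D := by ring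
      rw [h, div_le_iff₀ hDpos]; nlinarith
    calc |(-b/D) * Real.exp (a*t) + (a/D) * Real.exp (b*t)|
        ≤ |(-b/D) * Real.exp (a*t)| + |(a/D) * Real.exp (b*t)| := abs_add_le _ _
      _ = (-b/D) * Real.exp (a*t) + (-(a/D)) * Real.exp (b*t) := by
          rw [abs_mul, abs_mul, Real.abs_exp, Real.abs_exp,
            abs_of_nonneg hp, abs_of_nonpos hq]
      _ ≤ 2 * Real.exp (-(β^2*t)) + (4*β^2) * Real.exp (-t/2) := by
          have h1 : (-b/D) * Real.exp (a*t) ≤ 2 * Real.exp (-(β^2*t)) :=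
            mul_le_mul hpb hexpa hea (by norm_num)
          have h2 : (-(a/D)) * Real.exp (b*t) ≤ (4*β^2) * Real.exp (-t/2) :=
            mul_le_mul hqb hexpb heb (by positivity)
          linarith
      _ ≤ 4 * (β^2 * Real.exp (-t/2) + Real.exp (-(β^2 * t))) := by
          nlinarith [Real.exp_pos (-(β^2*t)), Real.exp_pos (-t/2)]
  · -- A₁
    have hu := unique_sol β a b (1/D) (-(1/D)) haroot hbroot A₁ A₁' A₁'' hd1 hd1' ho1
      (by rw [hA10]; ring)
      (by rw [hA10']; field_simp; rw [hadef, hbdef]; ring) t ht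
    rw [hu]
    have hpb : (1:ℝ)/D ≤ 2 := by rw [div_le_iff₀ hDpos]; linarith
    have hppos : (0:ℝ) < 1/D := by positivity
    calc |(1/D) * Real.exp (a*t) + (-(1/D)) * Real.exp (b*t)|
        ≤ |(1/D) * Real.exp (a*t)| + |(-(1/D)) * Real.exp (b*t)| := abs_add_le _ _
      _ = (1/D) * Real.exp (a*t) + (1/D) * Real.exp (b*t) := by
          rw [abs_mul, abs_mul, Real.abs_exp, Real.abs_exp, abs_neg,
            abs_of_pos hppos]
      _ ≤ 2 * Real.exp (-(β^2*t)) + 2 * Real.exp (-t/2) := by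
          have h1 := mul_le_mul hpb hexpa hea (by norm_num : (0:ℝ) ≤ 2)
          have h2 := mul_le_mul hpb hexpb heb (by norm_num : (0:ℝ) ≤ 2)
          linarith
      _ ≤ 4 * (Real.exp (-t/2) + Real.exp (-(β^2 * t))) := by
          nlinarith [Real.exp_pos (-(β^2*t)), Real.exp_pos (-t/2)]
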